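/- Let 𝒢 = (G, S, μ, l) be a reconciled gene tree that is least duplication-resolved, and let u, v ∈ V(G) with v a strict descendant of u (v ≺_G u). Then μ(u) ≠ μ(v) or l(u) ≠ l(v). -/

import Mathlib

open SimpleGraph

attribute [local instance] Classical.propDecidable

/-- A rooted tree: a finite connected acyclic graph with a distinguished root. -/
structure RTree (V : Type*) [Fintype V] where
  adj : SimpleGraph V
  isTree : adj.IsTree
  root : V

variable {V : Type*} [Fintype V]

/-- `Anc T a b` : `a` is an ancestor of `b` (i.e. `b ⪯ a`), expressed as:
`a` lies on the (unique) path from the root to `b`. -/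
def Anc (T : RTree V) (a b : V) : Prop :=
  T.adj.dist T.root b = T.adj.dist T.root a + T.adj.dist a b

/-- `IsChild T c p` : `c` is a child of `p`. -/
def IsChild (T : RTree V) (c p : V) : Prop :=
  T.adj.Adj c p ∧ Anc T p c

/-- The set of children of `v`. -/
def childSet (T : RTree V) (v : V) : Set V := {c | IsChild T c v}

/-- A leaf is a node with no children. -/
def IsLeaf (T : RTree V) (v : V) : Prop := ∀ c, ¬ IsChild T c v

/-- The clade of `v`: the set of leaves descending from `v`. -/
def clade (T : RTree V) (v : V) : Set V := {x | IsLeaf T x ∧ Anc T v x}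

/-- `w` is the lowest common ancestor of the set `X` in `T`. -/
def IsLCA (T : RTree V) (X : Set V) (w : V) : Prop :=
  (∀ x ∈ X, Anc T w x) ∧ ∀ w', (∀ x ∈ X, Anc T w' x) → Anc T w' w

/-- A species tree is a rooted binary tree: every internal node has exactly two children. -/
def IsSpeciesTree (S : RTree V) : Prop :=
  ∀ v, ¬ IsLeaf S v → (childSet S v).ncard = 2

/-- Number of leaves of a rooted tree. -/
noncomputable def numLeaves (T : RTree V) : ℕ := {v | IsLeaf T v}.ncard

/-- `Hsum S` = `H(S)`: the sum of root-to-internal-node distances in `S`. -/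
noncomputable def Hsum (S : RTree V) : ℕ :=
  ∑ v : V, if IsLeaf S v then 0 else S.adj.dist S.root v

inductive Evt | dup | spec | extant
deriving DecidableEq

/-- A reconciled gene tree with species tree `S`, whose leaves are labeled bijectively by
the set of genes `Γ`. -/
structure Recon (Γ : Type*) (VG : Type*) (VS : Type*) [Fintype VG] [Fintype VS]
    (S : RTree VS) where
  tree : RTree VG
  geneLeaf : Γ → VG
  geneLeaf_inj : Function.Injective geneLeaf
  geneLeaf_range : ∀ v, IsLeaf tree v ↔ ∃ g, geneLeaf g = v
  μ : VG → VS
  lbl : VG → Evt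
  internal_children : ∀ v, ¬ IsLeaf tree v → 2 ≤ (childSet tree v).ncard
  leaf_species : ∀ v, IsLeaf tree v → IsLeaf S (μ v)
  leaf_lbl : ∀ v, IsLeaf tree v → lbl v = Evt.extant
  internal_lbl : ∀ v, ¬ IsLeaf tree v → lbl v = Evt.dup ∨ lbl v = Evt.spec
  time_consistent : ∀ a b, Anc tree a b → Anc S (μ a) (μ b)
  spec_two_children : ∀ v, lbl v = Evt.spec →
    ¬ IsLeaf S (μ v) ∧ (childSet tree v).ncard = 2
  spec_separates : ∀ v, lbl v = Evt.spec →
    ∀ v₁ v₂, IsChild tree v₁ v → IsChild tree v₂ v → v₁ ≠ v₂ →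
      ∃ s₁ s₂, IsChild S s₁ (μ v) ∧ IsChild S s₂ (μ v) ∧ s₁ ≠ s₂ ∧
        ((Anc S s₁ (μ v₁) ∧ Anc S s₂ (μ v₂)) ∨ (Anc S s₂ (μ v₁) ∧ Anc S s₁ (μ v₂)))

variable {Γ : Type*} {VS VG₁ VG₂ : Type*} [Fintype VS] [Fintype VG₁] [Fintype VG₂]
  {S : RTree VS}

/-- The clade of a gene tree node, as a set of genes. -/
def gclade (𝒢 : Recon Γ VG₁ VS S) (v : VG₁) : Set Γ :=
  {g | Anc 𝒢.tree v (𝒢.geneLeaf g)}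

/-- Two reconciled gene trees (over the same species tree and gene set) are comparable if
corresponding extant genes map to the same species. -/
def Comparable (𝒢₁ : Recon Γ VG₁ VS S) (𝒢₂ : Recon Γ VG₂ VS S) : Prop :=
  ∀ g, 𝒢₁.μ (𝒢₁.geneLeaf g) = 𝒢₂.μ (𝒢₂.geneLeaf g)

/-- `m` is the correspondence map `v ↦ lca_{G₂}(L(G₁(v)))`. -/
def IsLcaMap (𝒢₁ : Recon Γ VG₁ VS S) (𝒢₂ : Recon Γ VG₂ VS S) (m : VG₁ → VG₂) : Prop :=
  ∀ v, IsLCA 𝒢₂.tree (𝒢₂.geneLeaf '' gclade 𝒢₁ v) (m v)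

/-- `μ` is the lca-mapping: every node maps to the lca of the species of its leaf descendants. -/
def UsesLcaMapping (𝒢 : Recon Γ VG₁ VS S) : Prop :=
  ∀ v, IsLCA S (𝒢.μ '' clade 𝒢.tree v) (𝒢.μ v)

/-- The path component `d_path(𝒢₁,𝒢₂)` (with `m` the lca correspondence map). -/
noncomputable def dPath (𝒢₁ : Recon Γ VG₁ VS S) (𝒢₂ : Recon Γ VG₂ VS S)
    (m : VG₁ → VG₂) : ℕ :=
  ∑ v : VG₁, S.adj.dist (𝒢₁.μ v) (𝒢₂.μ (m v))

/-- The label component `d_lbl(𝒢₁,𝒢₂)`. -/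
noncomputable def dLbl (𝒢₁ : Recon Γ VG₁ VS S) (𝒢₂ : Recon Γ VG₂ VS S)
    (m : VG₁ → VG₂) : ℕ :=
  {v : VG₁ | 𝒢₁.lbl v ≠ 𝒢₂.lbl (m v)}.ncard

/-- The asymmetric dissimilarity `d_asym = α·d_path + (1−α)·d_lbl`. -/
noncomputable def dAsym (α : ℝ) (𝒢₁ : Recon Γ VG₁ VS S) (𝒢₂ : Recon Γ VG₂ VS S)
    (m : VG₁ → VG₂) : ℝ :=
  α * (dPath 𝒢₁ 𝒢₂ m : ℝ) + (1 - α) * (dLbl 𝒢₁ 𝒢₂ m : ℝ)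

/-- The Path-Label Reconciliation dissimilarity `PLR(𝒢₁,𝒢₂)`, where `m₁₂`, `m₂₁` are the
lca correspondence maps in the two directions. -/
noncomputable def PLR (α : ℝ) (𝒢₁ : Recon Γ VG₁ VS S) (𝒢₂ : Recon Γ VG₂ VS S)
    (m₁₂ : VG₁ → VG₂) (m₂₁ : VG₂ → VG₁) : ℝ :=
  dAsym α 𝒢₁ 𝒢₂ m₁₂ + dAsym α 𝒢₂ 𝒢₁ m₂₁

/-- An edge `uv` (with `u` the parent of `v`) is redundant if both endpoints are duplications
mapped to the same species. -/
def RedundantEdge (𝒢 : Recon Γ VG₁ VS S) (u v : VG₁) : Prop :=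
  IsChild 𝒢.tree v u ∧ 𝒢.μ u = 𝒢.μ v ∧ 𝒢.lbl u = Evt.dup ∧ 𝒢.lbl v = Evt.dup

/-- A reconciled gene tree is least duplication-resolved if it has no redundant edge. -/
def LeastDupResolved (𝒢 : Recon Γ VG₁ VS S) : Prop :=
  ∀ u v, ¬ RedundantEdge 𝒢 u v

/-- `𝒢'` is obtained from `𝒢` by contracting the edge `uv` (`u` the parent of `v`), i.e.
deleting `v` and attaching its children to `u`; `φ` is the corresponding quotient map. -/
def IsContractionOf (𝒢 : Recon Γ VG₁ VS S) (u v : VG₁) (𝒢' : Recon Γ VG₂ VS S)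
    (φ : VG₁ → VG₂) : Prop :=
  Function.Surjective φ ∧
  φ u = φ v ∧
  (∀ a b, φ a = φ b → a = b ∨ (a = u ∧ b = v) ∨ (a = v ∧ b = u)) ∧
  (∀ x y, 𝒢'.tree.adj.Adj x y ↔
    ∃ a b, φ a = x ∧ φ b = y ∧ 𝒢.tree.adj.Adj a b ∧ ¬(a = u ∧ b = v) ∧ ¬(a = v ∧ b = u)) ∧
  𝒢'.tree.root = φ 𝒢.tree.root ∧
  (∀ g, 𝒢'.geneLeaf g = φ (𝒢.geneLeaf g)) ∧
  (∀ a, 𝒢'.μ (φ a) = 𝒢.μ a) ∧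
  (∀ a, 𝒢'.lbl (φ a) = 𝒢.lbl a)

/-- Symmetrized redundancy relation on nodes. -/
def RedundantAdj (𝒢 : Recon Γ VG₁ VS S) (a b : VG₁) : Prop :=
  RedundantEdge 𝒢 a b ∨ RedundantEdge 𝒢 b a

/-- `𝒢'` is the least duplication-resolved tree `LR(𝒢)` obtained by contracting every
redundant edge of `𝒢`; `φ` is the corresponding quotient map. -/
def IsLROf (𝒢 : Recon Γ VG₁ VS S) (𝒢' : Recon Γ VG₂ VS S) (φ : VG₁ → VG₂) : Prop :=
  Function.Surjective φ ∧
  (∀ a b, φ a = φ b ↔ Relation.EqvGen (RedundantAdj 𝒢) a b) ∧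
  (∀ x y, 𝒢'.tree.adj.Adj x y ↔
    ∃ a b, φ a = x ∧ φ b = y ∧ 𝒢.tree.adj.Adj a b ∧ ¬ RedundantAdj 𝒢 a b) ∧
  𝒢'.tree.root = φ 𝒢.tree.root ∧
  (∀ g, 𝒢'.geneLeaf g = φ (𝒢.geneLeaf g)) ∧
  (∀ a, 𝒢'.μ (φ a) = 𝒢.μ a) ∧
  (∀ a, 𝒢'.lbl (φ a) = 𝒢.lbl a)

/-- Isomorphism of reconciled gene trees: a leaf-fixing bijection preserving edges,
species maps and event labels. -/
def ReconIso (𝒢₁ : Recon Γ VG₁ VS S) (𝒢₂ : Recon Γ VG₂ VS S) : Prop :=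
  ∃ φ : VG₁ ≃ VG₂,
    (∀ g, φ (𝒢₁.geneLeaf g) = 𝒢₂.geneLeaf g) ∧
    (∀ a b, 𝒢₂.tree.adj.Adj (φ a) (φ b) ↔ 𝒢₁.tree.adj.Adj a b) ∧
    (∀ v, 𝒢₂.μ (φ v) = 𝒢₁.μ v) ∧
    (∀ v, 𝒢₂.lbl (φ v) = 𝒢₁.lbl v)

/-- Exactly one gene per species: the gene set is the set of species leaves, and each gene
resides in its own species. -/
def OneGenePerSpecies (𝒢 : Recon {s : VS // IsLeaf S s} VG₁ VS S) : Prop :=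
  ∀ g, 𝒢.μ (𝒢.geneLeaf g) = g.1


lemma anc_trans {V : Type*} [Fintype V] (T : RTree V) {a b c : V}
    (hab : Anc T a b) (hbc : Anc T b c) : Anc T a c := by
  have hconn := T.isTree.isConnected
  have h1 : T.adj.dist a c ≤ T.adj.dist a b + T.adj.dist b c := hconn.dist_triangle
  have h2 : T.adj.dist T.root c ≤ T.adj.dist T.root a + T.adj.dist a c := hconn.dist_triangle
  unfold Anc at *
  omega

lemma anc_antisymm {V : Type*} [Fintype V] (T : RTree V) {a b : V}
    (hab : Anc T a b) (hba : Anc T b a) : a = b := by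
  have hconn := T.isTree.isConnected
  have : T.adj.dist a b = 0 := by unfold Anc at *; omega
  exact hconn.dist_eq_zero_iff.mp this

/-- If `u` is a strict ancestor of `v`, there is a child of `u` that is an ancestor of `v`. -/
lemma exists_child_anc {V : Type*} [Fintype V] (T : RTree V) {u v : V}
    (h : Anc T u v) (hne : v ≠ u) : ∃ c, IsChild T c u ∧ Anc T c v := by
  have hconn := T.isTree.isConnected
  obtain ⟨p, hp⟩ := hconn.exists_walk_length_eq_dist u v
  have hd : 0 < T.adj.dist u v := hconn.pos_dist_of_ne (Ne.symm hne)
  cases p with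
  | nil => simp at hp; exact absurd rfl hne
  | cons hadj q =>
    rename_i c
    refine ⟨c, ⟨hadj.symm, ?_⟩, ?_⟩
    all_goals {
      have hq : T.adj.dist c v ≤ q.length := SimpleGraph.dist_le q
      have huc : T.adj.dist u c ≤ 1 := by
        simpa using SimpleGraph.dist_le (SimpleGraph.Walk.cons hadj SimpleGraph.Walk.nil)
      have hlen : q.length + 1 = T.adj.dist u v := by
        simpa [SimpleGraph.Walk.length_cons] using hp
      have h1 : T.adj.dist u v ≤ T.adj.dist u c + T.adj.dist c v := hconn.dist_triangle
      have h2 : T.adj.dist T.root c ≤ T.adj.dist T.root u + T.adj.dist u c := hconn.dist_triangle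
      have h3 : T.adj.dist T.root v ≤ T.adj.dist T.root c + T.adj.dist c v := hconn.dist_triangle
      unfold Anc at *
      omega
    }

/-- Under lca hypotheses, a strict ancestor with the same species image must be a duplication. -/
lemma lbl_dup_of_anc {Γ VS VG₁ : Type*} [Fintype VS] [Fintype VG₁] {S : RTree VS}
    (𝒢 : Recon Γ VG₁ VS S) {u v : VG₁}
    (hanc : Anc 𝒢.tree u v) (hne : v ≠ u) (hμ : 𝒢.μ u = 𝒢.μ v) :
    𝒢.lbl u = Evt.dup := by
  obtain ⟨c, hc, hcv⟩ := exists_child_anc 𝒢.tree hanc hne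
  have hnl : ¬ IsLeaf 𝒢.tree u := fun hl => hl c hc
  rcases 𝒢.internal_lbl u hnl with h | h
  · exact h
  exfalso
  have h2 := (𝒢.spec_two_children u h).2
  obtain ⟨a, b, hab, hset⟩ := Set.ncard_eq_two.mp h2
  have hcmem : c ∈ childSet 𝒢.tree u := hc
  rw [hset] at hcmem
  have hamem : a ∈ childSet 𝒢.tree u := by rw [hset]; simp
  have hbmem : b ∈ childSet 𝒢.tree u := by rw [hset]; simp
  -- pick the other child d ≠ c
  obtain ⟨d, hd, hdc⟩ : ∃ d, IsChild 𝒢.tree d u ∧ c ≠ d := by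
    rcases hcmem with rfl | rfl
    · exact ⟨b, hbmem, hab⟩
    · exact ⟨a, hamem, fun he => hab he.symm⟩
  obtain ⟨s₁, s₂, hs₁, hs₂, hss, hcase⟩ := 𝒢.spec_separates u h c d hc hd hdc
  -- in either case some child s of μ u is an ancestor of μ c
  obtain ⟨s, hs, hsc⟩ : ∃ s, IsChild S s (𝒢.μ u) ∧ Anc S s (𝒢.μ c) := by
    rcases hcase with ⟨h1, _⟩ | ⟨h1, _⟩
    · exact ⟨s₁, hs₁, h1⟩
    · exact ⟨s₂, hs₂, h1⟩
  have hcv' : Anc S (𝒢.μ c) (𝒢.μ v) := 𝒢.time_consistent c v hcv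
  have hsu : Anc S s (𝒢.μ u) := by
    rw [hμ]; exact anc_trans S hsc hcv'
  have : s = 𝒢.μ u := anc_antisymm S hsu hs.2
  exact hs.1.ne this

/-- In a least duplication-resolved reconciled gene tree, any strict
ancestor-descendant pair differs in species map or in event label. -/
theorem stmt0 (hS : IsSpeciesTree S) (𝒢 : Recon Γ VG₁ VS S)
    (hldr : LeastDupResolved 𝒢) (u v : VG₁)
    (hanc : Anc 𝒢.tree u v) (hne : v ≠ u) :
    𝒢.μ u ≠ 𝒢.μ v ∨ 𝒢.lbl u ≠ 𝒢.lbl v := by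
  by_contra hcon
  push_neg at hcon
  obtain ⟨hμ, hlbl⟩ := hcon
  obtain ⟨c, hc, hcv⟩ := exists_child_anc 𝒢.tree hanc hne
  have hμc : 𝒢.μ c = 𝒢.μ u := by
    have h1 : Anc S (𝒢.μ u) (𝒢.μ c) := 𝒢.time_consistent u c hc.2
    have h2 : Anc S (𝒢.μ c) (𝒢.μ v) := 𝒢.time_consistent c v hcv
    rw [← hμ] at h2
    exact (anc_antisymm S h1 h2).symm
  have hlu : 𝒢.lbl u = Evt.dup := lbl_dup_of_anc 𝒢 hanc hne hμ
  have hlc : 𝒢.lbl c = Evt.dup := by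
    by_cases hcv' : c = v
    · rw [hcv', ← hlbl]; exact hlu
    · exact lbl_dup_of_anc 𝒢 hcv (Ne.symm hcv') (by rw [hμc, hμ])
  exact hldr u c ⟨hc, hμc.symm, hlu, hlc⟩
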